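/- For a finite poset P and a finite set G of upsets, if x and y lie in exactly the same members of the Heyting subalgebra of Up(P) generated by G, then x ∼^G_n y for every n; conversely, if x ∼^G_n y for every n then x and y lie in the same members of the subalgebra generated by G. -/

import Mathlib

/-- The bisimulation-style relations `∼^G_n` on a preordered set, relative to a
family `G` of subsets. -/
def simRel {α : Type*} [Preorder α] (G : Set (Set α)) : ℕ → α → α → Prop
  | 0 => fun x y => ∀ g ∈ G, (x ∈ g ↔ y ∈ g)
  | n + 1 => fun x y =>
      (∀ z, x ≤ z → ∃ w, y ≤ w ∧ simRel G n z w) ∧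
      (∀ w, y ≤ w → ∃ z, x ≤ z ∧ simRel G n z w)


/-- Heyting implication of subsets of a poset: `U → V = (↓(U \ V))ᶜ`,
equivalently the set of points all of whose successors in `U` lie in `V`. -/
def himpSet {α : Type*} [Preorder α] (U V : Set α) : Set α :=
  {x | ∀ y, x ≤ y → y ∈ U → y ∈ V}

/-- Membership in the Heyting subalgebra of `Up(P)` generated by `G`:
the closure of `G` under `∅`, `univ`, intersection, union and Heyting
implication of upsets. -/
inductive HGen {α : Type*} [Preorder α] (G : Set (Set α)) : Set α → Prop
  | base {U : Set α} : U ∈ G → HGen G U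
  | bot : HGen G ∅
  | top : HGen G Set.univ
  | inf {U V : Set α} : HGen G U → HGen G V → HGen G (U ∩ V)
  | sup {U V : Set α} : HGen G U → HGen G V → HGen G (U ∪ V)
  | himp {U V : Set α} : HGen G U → HGen G V → HGen G (himpSet U V)

section Aux

variable {α : Type*} [Preorder α] {G : Set (Set α)}

lemma simRel_symm : ∀ n {x y : α}, simRel G n x y → simRel G n y x := by
  intro n
  induction n with
  | zero => intro x y h g hg; exact (h g hg).symm
  | succ n ih =>
    rintro x y ⟨h1, h2⟩
    exact ⟨fun w hw => (h2 w hw).imp fun z ⟨hz, hs⟩ => ⟨hz, ih hs⟩,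
           fun z hz => (h1 z hz).imp fun w ⟨hw, hs⟩ => ⟨hw, ih hs⟩⟩

lemma simRel_succ (hG : ∀ g ∈ G, IsUpperSet g) :
    ∀ n {x y : α}, simRel G (n + 1) x y → simRel G n x y := by
  intro n
  induction n with
  | zero =>
    rintro x y ⟨h1, h2⟩ g hg
    constructor
    · intro hx
      obtain ⟨z, hxz, hs⟩ := h2 y le_rfl
      exact (hs g hg).mp (hG g hg hxz hx)
    · intro hy
      obtain ⟨w, hyw, hs⟩ := h1 x le_rfl
      exact (hs g hg).mpr (hG g hg hyw hy)
  | succ n ih =>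
    rintro x y ⟨h1, h2⟩
    exact ⟨fun z hz => (h1 z hz).imp fun w ⟨hw, hs⟩ => ⟨hw, ih hs⟩,
           fun w hw => (h2 w hw).imp fun z ⟨hz, hs⟩ => ⟨hz, ih hs⟩⟩

lemma simRel_of_le (hG : ∀ g ∈ G, IsUpperSet g) {m n : ℕ} (h : m ≤ n) :
    ∀ {x y : α}, simRel G n x y → simRel G m x y := by
  induction h with
  | refl => exact fun h => h
  | step _ ih => exact fun hs => ih (simRel_succ hG _ hs)

lemma hgen_invariant (hG : ∀ g ∈ G, IsUpperSet g) {U : Set α} (hU : HGen G U) :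
    ∃ n, ∀ a b : α, simRel G n a b → (a ∈ U ↔ b ∈ U) := by
  induction hU with
  | base hg => exact ⟨1, fun a b h => simRel_succ hG 0 h _ hg⟩
  | bot => exact ⟨0, fun a b _ => Iff.rfl⟩
  | top => exact ⟨0, fun a b _ => Iff.rfl⟩
  | inf hU hV ihU ihV =>
    obtain ⟨n1, h1⟩ := ihU; obtain ⟨n2, h2⟩ := ihV
    refine ⟨max n1 n2, fun a b h => ?_⟩
    simp only [Set.mem_inter_iff]
    exact and_congr (h1 a b (simRel_of_le hG (le_max_left _ _) h))
      (h2 a b (simRel_of_le hG (le_max_right _ _) h))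
  | sup hU hV ihU ihV =>
    obtain ⟨n1, h1⟩ := ihU; obtain ⟨n2, h2⟩ := ihV
    refine ⟨max n1 n2, fun a b h => ?_⟩
    simp only [Set.mem_union]
    exact or_congr (h1 a b (simRel_of_le hG (le_max_left _ _) h))
      (h2 a b (simRel_of_le hG (le_max_right _ _) h))
  | @himp U V hU hV ihU ihV =>
    obtain ⟨n1, h1⟩ := ihU; obtain ⟨n2, h2⟩ := ihV
    refine ⟨max n1 n2 + 1, ?_⟩
    have key : ∀ a b : α, simRel G (max n1 n2 + 1) a b →
        a ∈ himpSet U V → b ∈ himpSet U V := by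
      intro a b hab ha c hbc hcU
      obtain ⟨z, haz, hs⟩ := hab.2 c hbc
      have hzU : z ∈ U := (h1 z c (simRel_of_le hG (le_max_left _ _) hs)).mpr hcU
      have hzV : z ∈ V := ha z haz hzU
      exact (h2 z c (simRel_of_le hG (le_max_right _ _) hs)).mp hzV
    exact fun a b h => ⟨key a b h, key b a (simRel_symm _ h)⟩

lemma hgen_sInter {S : Set (Set α)} (hS : S.Finite) (h : ∀ U ∈ S, HGen G U) :
    HGen G (⋂₀ S) := by
  refine Set.Finite.induction_on (motive := fun s _ => (∀ U ∈ s, HGen G U) → HGen G (⋂₀ s))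
    S hS (fun _ => by simpa using HGen.top) ?_ h
  intro a s _ _ ih h'
  rw [Set.sInter_insert]
  exact HGen.inf (h' a (Set.mem_insert _ _))
    (ih fun U hU => h' U (Set.mem_insert_of_mem _ hU))

lemma hgen_sUnion {S : Set (Set α)} (hS : S.Finite) (h : ∀ U ∈ S, HGen G U) :
    HGen G (⋃₀ S) := by
  refine Set.Finite.induction_on (motive := fun s _ => (∀ U ∈ s, HGen G U) → HGen G (⋃₀ s))
    S hS (fun _ => by simpa using HGen.bot) ?_ h
  intro a s _ _ ih h'
  rw [Set.sUnion_insert]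
  exact HGen.sup (h' a (Set.mem_insert _ _))
    (ih fun U hU => h' U (Set.mem_insert_of_mem _ hU))

lemma hgen_iInter {ι : Type*} [Finite ι] (f : ι → Set α) (h : ∀ i, HGen G (f i)) :
    HGen G (⋂ i, f i) := by
  rw [← Set.sInter_range]
  exact hgen_sInter (Set.finite_range f) (by rintro U ⟨i, rfl⟩; exact h i)

lemma hgen_iUnion {ι : Type*} [Finite ι] (f : ι → Set α) (h : ∀ i, HGen G (f i)) :
    HGen G (⋃ i, f i) := by
  rw [← Set.sUnion_range]
  exact hgen_sUnion (Set.finite_range f) (by rintro U ⟨i, rfl⟩; exact h i)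

lemma separate [Finite α] :
    ∀ n (x y : α), ¬ simRel G n x y → ∃ U, HGen G U ∧ ¬ (x ∈ U ↔ y ∈ U) := by
  intro n
  induction n with
  | zero =>
    intro x y h
    simp only [simRel, not_forall] at h
    obtain ⟨g, hg, hiff⟩ := h
    exact ⟨g, HGen.base hg, hiff⟩
  | succ n ih =>
    have half : ∀ x y z : α, x ≤ z → (∀ w, y ≤ w → ¬ simRel G n z w) →
        ∃ U, HGen G U ∧ ¬ (x ∈ U ↔ y ∈ U) := by
      intro x y z hxz hzw
      have key : ∀ w : {w : α // y ≤ w}, ∃ U, HGen G U ∧ ¬ (z ∈ U ↔ (w : α) ∈ U) :=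
        fun w => ih z w (hzw w w.2)
      choose U hU hsep using key
      set A : Set α := ⋂ w : {w : {w : α // y ≤ w} // z ∈ U w}, U w.1 with hA
      set B : Set α := ⋃ w : {w : {w : α // y ≤ w} // z ∉ U w}, U w.1 with hB
      have hAgen : HGen G A := hgen_iInter _ fun w => hU w.1
      have hBgen : HGen G B := hgen_iUnion _ fun w => hU w.1
      have hzA : z ∈ A := Set.mem_iInter.2 fun w => w.2
      have hzB : z ∉ B := fun hz => by
        obtain ⟨w, hw⟩ := Set.mem_iUnion.1 hz; exact w.2 hw
      refine ⟨himpSet A B, HGen.himp hAgen hBgen, ?_⟩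
      have hx : x ∉ himpSet A B := fun hx => hzB (hx z hxz hzA)
      have hy : y ∈ himpSet A B := by
        intro c hyc hcA
        by_cases hz : z ∈ U ⟨c, hyc⟩
        · exfalso
          have hc : c ∈ U ⟨c, hyc⟩ := Set.mem_iInter.1 hcA ⟨⟨c, hyc⟩, hz⟩
          exact hsep ⟨c, hyc⟩ (iff_of_true hz hc)
        · have hc : c ∈ U ⟨c, hyc⟩ := by
            by_contra hc
            exact hsep ⟨c, hyc⟩ (iff_of_false hz hc)
          exact Set.mem_iUnion.2 ⟨⟨⟨c, hyc⟩, hz⟩, hc⟩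
      exact fun hiff => hx (hiff.mpr hy)
    intro x y h
    have h' : ¬ ((∀ z, x ≤ z → ∃ w, y ≤ w ∧ simRel G n z w) ∧
        (∀ w, y ≤ w → ∃ z, x ≤ z ∧ simRel G n z w)) := h
    rcases not_and_or.mp h' with h'' | h''
    · push_neg at h''
      obtain ⟨z, hxz, hz⟩ := h''
      exact half x y z hxz fun w hw hs => (hz w hw) hs
    · push_neg at h''
      obtain ⟨w, hyw, hw⟩ := h''
      obtain ⟨V, hV, hsep⟩ := half y x w hyw fun z hz hs => hw z hz (simRel_symm n hs)
      exact ⟨V, hV, fun hiff => hsep hiff.symm⟩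

end Aux

/-- In a finite poset, two points lie in exactly the same members of the
Heyting subalgebra generated by a finite family `G` of upsets iff they are
`∼^G_n`-equivalent for every `n`. -/
theorem mem_hgen_iff_simRel {α : Type*} [PartialOrder α] [Finite α]
    (G : Set (Set α)) (hG : ∀ g ∈ G, IsUpperSet g) (hGfin : G.Finite)
    (x y : α) :
    (∀ U : Set α, HGen G U → (x ∈ U ↔ y ∈ U)) ↔ (∀ n, simRel G n x y) := by
  constructor
  · intro h n
    by_contra hn
    obtain ⟨U, hU, hsep⟩ := separate n x y hn
    exact hsep (h U hU)
  · intro h U hU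
    obtain ⟨n, hn⟩ := hgen_invariant hG hU
    exact hn x y (h n)
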